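/- If p(z) = 1 + Σ_{k≥1} cₖ zᵏ is analytic with Re p(z) > 0 on the unit disk and p(0)=1, then for all positive integers n, m and real λ with 0 ≤ λ ≤ 1, |λ·cₙ·cₘ − c_{n+m}| ≤ 2; and for λ outside [0,1], |λ·cₙ·cₘ − c_{n+m}| ≤ 2|2λ−1|. -/

import Mathlib

open MeasureTheory Real Complex Filter Set Topology

noncomputable def Complex.abs : AbsoluteValue ℂ ℝ := NormedField.toAbsoluteValue ℂ

theorem Complex.norm_eq_abs (z : ℂ) : ‖z‖ = Complex.abs z := rfl

theorem Complex.abs_ofReal (x : ℝ) : Complex.abs (x : ℂ) = |x| := by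
  rw [← Complex.norm_eq_abs]; simp

theorem Complex.abs_exp_ofReal_mul_I (x : ℝ) : Complex.abs (Complex.exp (x * Complex.I)) = 1 :=
  Complex.norm_exp_ofReal_mul_I x

theorem Complex.abs_two : Complex.abs 2 = 2 := by
  rw [← Complex.norm_eq_abs]; simp

theorem Complex.normSq_eq_abs (z : ℂ) : Complex.normSq z = Complex.abs z ^ 2 :=
  Complex.normSq_eq_norm_sq z

lemma conj_E (k : ℤ) (t : ℝ) :
    (starRingEnd ℂ) (Complex.exp (-(k:ℂ) * Complex.I * t)) =
      Complex.exp (-((-k:ℤ):ℂ) * Complex.I * t) := by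
  rw [← Complex.exp_conj]
  congr 1
  simp only [map_mul, map_neg, Complex.conj_I, Complex.conj_ofReal, map_intCast]
  push_cast
  ring

lemma norm_E (k : ℤ) (t : ℝ) : ‖Complex.exp (-(k:ℂ) * Complex.I * t)‖ = 1 := by
  rw [show -(k:ℂ) * Complex.I * t = ((-k*t : ℝ):ℂ) * Complex.I by push_cast; ring]
  exact Complex.abs_exp_ofReal_mul_I _

lemma mul_E (k l : ℤ) (t : ℝ) :
    Complex.exp (-(k:ℂ) * Complex.I * t) * Complex.exp (-(l:ℂ) * Complex.I * t)
      = Complex.exp (-((k+l:ℤ):ℂ) * Complex.I * t) := by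
  rw [← Complex.exp_add]
  congr 1
  push_cast
  ring

lemma cont_E (k : ℤ) : Continuous fun t : ℝ => Complex.exp (-(k:ℂ) * Complex.I * t) :=
  Complex.continuous_exp.comp (continuous_const.mul Complex.continuous_ofReal)

lemma base_int (k : ℤ) : ∫ t in Set.Ioc (0:ℝ) (2*π), Complex.exp ((k:ℂ) * Complex.I * t)
    = if k = 0 then (2*π : ℂ) else 0 := by
  rw [← intervalIntegral.integral_of_le (by positivity : (0:ℝ) ≤ 2*π)]
  split_ifs with h
  · simp [h]
  · rw [integral_exp_mul_complex (by simp [Complex.ext_iff, h] : (k:ℂ) * Complex.I ≠ 0)]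
    have : (k:ℂ) * Complex.I * (2*π : ℝ) = (k:ℤ) * (2 * π * Complex.I) := by
      push_cast; ring
    rw [this, Complex.exp_int_mul_two_pi_mul_I]
    simp

lemma aux_summable {p : ℂ → ℂ} {c : ℕ → ℂ}
    (hsum : ∀ z ∈ Metric.ball (0:ℂ) 1, HasSum (fun k => c k * z ^ k) (p z))
    {r : ℝ} (h0 : 0 ≤ r) (h1 : r < 1) : Summable (fun j => Complex.abs (c j) * r ^ j) := by
  set ρ : ℝ := (1+r)/2 with hρdef
  have hrρ : r < ρ := by rw [hρdef]; linarith
  have hρ1 : ρ < 1 := by rw [hρdef]; linarith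
  have hρ0 : 0 < ρ := by rw [hρdef]; linarith
  have hmem : (ρ:ℂ) ∈ Metric.ball (0:ℂ) 1 := by
    simp only [Metric.mem_ball, Complex.dist_eq, sub_zero, Complex.norm_eq_abs, Complex.abs_ofReal,
      abs_of_pos hρ0]
    exact hρ1
  have hs := (hsum _ hmem).summable
  have hnorm : ∀ j : ℕ, ‖c j * (ρ:ℂ)^j‖ = Complex.abs (c j) * ρ^j := by
    intro j
    simp [Complex.norm_eq_abs, map_mul, map_pow, Complex.abs_ofReal, abs_of_pos hρ0]
  have ht : Tendsto (fun j => Complex.abs (c j) * ρ^j) atTop (𝓝 0) := by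
    have := hs.tendsto_atTop_zero.norm
    simp only [norm_zero] at this
    simpa only [hnorm] using this
  obtain ⟨C, hC⟩ := ht.bddAbove_range
  have hCb : ∀ j, Complex.abs (c j) * ρ^j ≤ C := fun j => hC (Set.mem_range_self j)
  have hgeo : Summable (fun j : ℕ => C * (r/ρ)^j) :=
    (summable_geometric_of_lt_one (by positivity) (by rw [div_lt_one hρ0]; exact hrρ)).mul_left C
  refine Summable.of_nonneg_of_le (fun j => by positivity) (fun j => ?_) hgeo
  have : Complex.abs (c j) * r^j = (Complex.abs (c j) * ρ^j) * (r/ρ)^j := by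
    rw [mul_assoc, ← mul_pow]
    congr 2
    field_simp
  rw [this]
  exact mul_le_mul_of_nonneg_right (hCb j) (by positivity)

lemma fourier_lemma {p : ℂ → ℂ} {c : ℕ → ℂ}
    (hsum : ∀ z ∈ Metric.ball (0:ℂ) 1, HasSum (fun k => c k * z ^ k) (p z))
    {r : ℝ} (h0 : 0 < r) (h1 : r < 1) (k : ℤ) :
    ∫ t in Set.Ioc (0:ℝ) (2*π),
        p ((r:ℂ) * Complex.exp (t * Complex.I)) * Complex.exp (-(k:ℂ) * Complex.I * t)
      = if 0 ≤ k then 2*π * c k.toNat * (r:ℝ)^k.toNat else 0 := by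
  set z : ℝ → ℂ := fun t => (r:ℂ) * Complex.exp (t * Complex.I) with hzdef
  have hz : ∀ t : ℝ, z t ∈ Metric.ball (0:ℂ) 1 := by
    intro t
    simp only [hzdef, Metric.mem_ball, Complex.dist_eq, sub_zero, Complex.norm_eq_abs, map_mul,
      Complex.abs_ofReal, Complex.abs_exp_ofReal_mul_I, abs_of_pos h0, mul_one]
    exact h1
  set F : ℕ → ℝ → ℂ := fun j t =>
    (c j * (r:ℂ)^j) * Complex.exp ((((j:ℤ) - k : ℤ):ℂ) * Complex.I * t) with hFdef
  have hpt : ∀ t : ℝ, HasSum (fun j => F j t)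
      (p (z t) * Complex.exp (-(k:ℂ) * Complex.I * t)) := by
    intro t
    have h := (hsum _ (hz t)).mul_right (Complex.exp (-(k:ℂ) * Complex.I * t))
    suffices hfun : (fun j => F j t) = fun j => c j * z t ^ j * Complex.exp (-(k:ℂ) * Complex.I * t) by
      rw [hfun]; exact h
    funext j
    have harg : ((((j:ℤ) - k : ℤ)):ℂ) * Complex.I * t
        = (j:ℂ) * ((t:ℂ) * Complex.I) + (-(k:ℂ) * Complex.I * t) := by push_cast; ring
    rw [hFdef]
    simp only []
    rw [harg, Complex.exp_add, hzdef]
    simp only []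
    rw [mul_pow, ← Complex.exp_nat_mul]
    ring
  have hFi : ∀ j : ℕ, IntegrableOn (F j) (Set.Ioc (0:ℝ) (2*π)) volume := by
    intro j
    apply Continuous.integrableOn_Ioc
    exact continuous_const.mul (Complex.continuous_exp.comp
      (continuous_const.mul Complex.continuous_ofReal))
  have hFnorm : ∀ (j : ℕ) (t : ℝ), ‖F j t‖ = Complex.abs (c j) * r^j := by
    intro j t
    simp only [hFdef, norm_mul, Complex.norm_eq_abs, map_mul, map_pow, Complex.abs_ofReal,
      abs_of_pos h0]
    rw [show ((((j:ℤ) - k : ℤ)):ℂ) * Complex.I * t = (((((j:ℤ) - k : ℤ)):ℝ) * t : ℝ) * Complex.I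
      by push_cast; ring, Complex.abs_exp_ofReal_mul_I, mul_one]
  have h2 : Summable fun j => ∫ t in Set.Ioc (0:ℝ) (2*π), ‖F j t‖ := by
    have : ∀ j : ℕ, (∫ t in Set.Ioc (0:ℝ) (2*π), ‖F j t‖) = (2*π) * (Complex.abs (c j) * r^j) := by
      intro j
      simp only [hFnorm]
      rw [setIntegral_const]
      simp [Real.volume_Ioc, ENNReal.toReal_ofReal (by positivity : (0:ℝ) ≤ 2*π)]
      exact Or.inl Real.pi_pos.le
    rw [funext this]
    exact ((aux_summable hsum h0.le h1).mul_left _)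
  have key : (∫ t in Set.Ioc (0:ℝ) (2*π), p (z t) * Complex.exp (-(k:ℂ) * Complex.I * t))
      = ∑' j, ∫ t in Set.Ioc (0:ℝ) (2*π), F j t := by
    rw [integral_tsum_of_summable_integral_norm hFi h2]
    exact integral_congr_ae (Eventually.of_forall fun t => ((hpt t).tsum_eq).symm)
  rw [key]
  have hFval : ∀ j : ℕ, (∫ t in Set.Ioc (0:ℝ) (2*π), F j t)
      = if (j:ℤ) = k then (c j * (r:ℂ)^j) * (2*π:ℂ) else 0 := by
    intro j
    rw [hFdef]
    simp only []
    rw [MeasureTheory.integral_const_mul, base_int]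
    simp only [sub_eq_zero]
    split_ifs <;> simp
  simp only [hFval]
  by_cases hk : 0 ≤ k
  · rw [if_pos hk, tsum_eq_single k.toNat (fun j hj => if_neg (by omega))]
    rw [if_pos (by omega)]
    push_cast
    ring
  · rw [if_neg hk]
    have hz2 : ∀ j : ℕ, (if ((j:ℕ):ℤ) = k then c j * (r:ℂ)^j * (2*(π:ℂ)) else 0) = 0 :=
      fun j => if_neg (by omega)
    simp only [hz2, tsum_zero]


lemma cont_pz {p : ℂ → ℂ} {c : ℕ → ℂ}
    (hsum : ∀ z ∈ Metric.ball (0:ℂ) 1, HasSum (fun k => c k * z ^ k) (p z))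
    {r : ℝ} (h0 : 0 < r) (h1 : r < 1) :
    Continuous fun t : ℝ => p ((r:ℂ) * Complex.exp (t * Complex.I)) := by
  have hz : ∀ t : ℝ, (r:ℂ) * Complex.exp ((t:ℂ) * Complex.I) ∈ Metric.ball (0:ℂ) 1 := by
    intro t
    simp only [Metric.mem_ball, Complex.dist_eq, sub_zero, Complex.norm_eq_abs, map_mul,
      Complex.abs_ofReal, Complex.abs_exp_ofReal_mul_I, abs_of_pos h0, mul_one]
    exact h1
  have hS : ∀ t : ℝ, HasSum (fun j : ℕ => c j * (r:ℂ)^j * Complex.exp ((j:ℂ) * Complex.I * t))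
      (p ((r:ℂ) * Complex.exp (t * Complex.I))) := by
    intro t
    have h := hsum _ (hz t)
    convert h using 2 with j
    rw [mul_pow, ← Complex.exp_nat_mul]
    ring_nf
  have hcont := continuous_tsum
    (f := fun (j : ℕ) (t : ℝ) => c j * (r:ℂ)^j * Complex.exp ((j:ℂ) * Complex.I * t))
    (fun j => continuous_const.mul (Complex.continuous_exp.comp
      (continuous_const.mul Complex.continuous_ofReal)))
    (aux_summable hsum h0.le h1)
    (fun j t => by
      have he : ‖Complex.exp ((j:ℂ) * Complex.I * t)‖ = 1 := by
        rw [show (j:ℂ) * Complex.I * (t:ℂ) = ((j*t : ℝ):ℂ) * Complex.I by push_cast; ring,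
          Complex.norm_eq_abs, Complex.abs_exp_ofReal_mul_I]
      rw [norm_mul, he, mul_one]
      simp [Complex.norm_eq_abs, map_mul, map_pow, Complex.abs_ofReal, abs_of_pos h0])
  exact hcont.congr (fun t => (hS t).tsum_eq)

lemma moment {p : ℂ → ℂ} {c : ℕ → ℂ} (hc0 : c 0 = 1)
    (hsum : ∀ z ∈ Metric.ball (0:ℂ) 1, HasSum (fun k => c k * z ^ k) (p z))
    {r : ℝ} (h0 : 0 < r) (h1 : r < 1) (k : ℤ) :
    (∫ t in Set.Ioc (0:ℝ) (2*π),
        ((p ((r:ℂ) * Complex.exp (t * Complex.I))).re : ℂ) * Complex.exp (-(k:ℂ) * Complex.I * t))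
      = if k = 0 then (2*π:ℂ) else if 0 < k then π * (c k.toNat * (r:ℂ)^k.toNat)
          else π * (starRingEnd ℂ) (c (-k).toNat * (r:ℂ)^(-k).toNat) := by
  have hpc := cont_pz hsum h0 h1
  have hpw : ∀ t : ℝ, ((p ((r:ℂ) * Complex.exp (t * Complex.I))).re : ℂ) * Complex.exp (-(k:ℂ) * Complex.I * t)
      = (p ((r:ℂ) * Complex.exp (t * Complex.I)) * Complex.exp (-(k:ℂ) * Complex.I * t)
        + (starRingEnd ℂ) (p ((r:ℂ) * Complex.exp (t * Complex.I)) * Complex.exp (-((-k:ℤ):ℂ) * Complex.I * t)))/2 := by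
    intro t
    rw [map_mul, conj_E]
    have h2 : ((-(-k):ℤ):ℂ) = (k:ℂ) := by push_cast; ring
    rw [h2]
    have h3 := Complex.add_conj (p ((r:ℂ) * Complex.exp (t * Complex.I)))
    rw [mul_comm ((starRingEnd ℂ) _) (Complex.exp _)]
    rw [show ∀ x y e : ℂ, (x * e + e * y) = e * (x + y) from fun x y e => by ring]
    rw [h3]
    push_cast
    ring
  rw [integral_congr_ae (Eventually.of_forall hpw)]
  have hint1 : IntegrableOn (fun t : ℝ => p ((r:ℂ) * Complex.exp (t * Complex.I)) * Complex.exp (-(k:ℂ) * Complex.I * t)) (Set.Ioc (0:ℝ) (2*π)) volume :=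
    (hpc.mul (cont_E k)).integrableOn_Ioc
  have hint2 : IntegrableOn (fun t : ℝ => (starRingEnd ℂ) (p ((r:ℂ) * Complex.exp (t * Complex.I)) * Complex.exp (-((-k:ℤ):ℂ) * Complex.I * t))) (Set.Ioc (0:ℝ) (2*π)) volume :=
    (Complex.continuous_conj.comp (hpc.mul (cont_E (-k)))).integrableOn_Ioc
  rw [integral_div, integral_add hint1 hint2, integral_conj]
  rw [fourier_lemma hsum h0 h1 k, fourier_lemma hsum h0 h1 (-k)]
  rcases lt_trichotomy k 0 with hk | hk | hk
  · rw [if_neg (by omega), if_pos (by omega), if_neg (by omega), if_neg (by omega)]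
    simp only [map_mul, map_pow, Complex.conj_ofReal, map_ofNat, zero_add]
    push_cast
    ring
  · subst hk
    rw [if_pos le_rfl, if_pos (by omega : (0:ℤ) ≤ -0), if_pos rfl]
    simp only [neg_zero, Int.toNat_zero, hc0, pow_zero, neg_zero, mul_one, map_mul, map_one,
      Complex.conj_ofReal, map_ofNat]
    push_cast
    ring
  · rw [if_pos (by omega), if_neg (by omega), if_neg (by omega), if_pos hk]
    simp only [map_zero, add_zero]
    push_cast
    ring

lemma cs_aux {A B t : ℝ} (hA : 0 ≤ A) (hB : 0 ≤ B)
    (h : ∀ s : ℝ, 0 < s → t ≤ (s*A + B/s)/2) : t ≤ Real.sqrt A * Real.sqrt B := by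
  rcases eq_or_lt_of_le hA with hA0 | hA0
  · have ht : t ≤ 0 := by
      rcases eq_or_lt_of_le hB with hB0 | hB0
      · have := h 1 one_pos; simp [← hA0, ← hB0] at this; linarith
      · by_contra hc
        push_neg at hc
        have h2 := h (B/t) (by positivity)
        rw [← hA0] at h2
        have : B / (B/t) = t := by field_simp
        rw [this] at h2; linarith
    exact ht.trans (by positivity)
  · rcases eq_or_lt_of_le hB with hB0 | hB0
    · have ht : t ≤ 0 := by
        by_contra hc
        push_neg at hc
        have h2 := h (t/A) (by positivity)
        rw [← hB0] at h2
        have : t/A * A = t := by field_simp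
        rw [this] at h2
        simp at h2
        nlinarith
      exact ht.trans (by positivity)
    · have hu := Real.sq_sqrt (le_of_lt hA0)
      have hv := Real.sq_sqrt (le_of_lt hB0)
      have hu0 : 0 < Real.sqrt A := Real.sqrt_pos.2 hA0
      have hv0 : 0 < Real.sqrt B := Real.sqrt_pos.2 hB0
      have h2 := h (Real.sqrt B / Real.sqrt A) (by positivity)
      have heq : (Real.sqrt B / Real.sqrt A * A + B / (Real.sqrt B / Real.sqrt A))/2
          = Real.sqrt A * Real.sqrt B := by
        field_simp; nlinarith [hu, hv]
      rwa [heq] at h2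

noncomputable def EE (k : ℤ) (t : ℝ) : ℂ := Complex.exp (-(k:ℂ) * Complex.I * t)

set_option maxHeartbeats 1000000 in
lemma key_r {p : ℂ → ℂ} {c : ℕ → ℂ} (hc0 : c 0 = 1)
    (hsum : ∀ z ∈ Metric.ball (0:ℂ) 1, HasSum (fun k => c k * z ^ k) (p z))
    (hre : ∀ z ∈ Metric.ball (0:ℂ) 1, 0 < (p z).re)
    {r : ℝ} (h0 : 0 < r) (h1 : r < 1) (n m : ℕ) (hn : 1 ≤ n) (hm : 1 ≤ m) :
    r^(n+m) * Complex.abs (c n * c m - c (n+m)) ≤ 2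
      ∧ r^(n+m) * Complex.abs (c (n+m)) ≤ 2 := by
  have hz : ∀ t : ℝ, (r:ℂ) * Complex.exp ((t:ℂ) * Complex.I) ∈ Metric.ball (0:ℂ) 1 := by
    intro t
    simp only [Metric.mem_ball, Complex.dist_eq, sub_zero, Complex.norm_eq_abs, map_mul,
      Complex.abs_ofReal, Complex.abs_exp_ofReal_mul_I, abs_of_pos h0, mul_one]
    exact h1
  have hpc := cont_pz hsum h0 h1
  set w : ℝ → ℝ := fun t => (p ((r:ℂ) * Complex.exp (t * Complex.I))).re with hwdef
  have hwc : Continuous w := Complex.continuous_re.comp hpc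
  have hwpos : ∀ t : ℝ, 0 < w t := fun t => hre _ (hz t)
  set q : ℝ → ℂ := fun t => ((w t : ℝ) : ℂ) with hqdef
  have hqc : Continuous q := Complex.continuous_ofReal.comp hwc
  have hqnorm : ∀ t, ‖q t‖ = w t := by
    intro t
    simp only [hqdef, Complex.norm_eq_abs, Complex.abs_ofReal, abs_of_pos (hwpos t)]
  have hMom : ∀ k : ℤ, (∫ t in Set.Ioc (0:ℝ) (2*π), q t * EE k t)
      = if k = 0 then (2*π:ℂ) else if 0 < k then π * (c k.toNat * (r:ℂ)^k.toNat)
          else π * (starRingEnd ℂ) (c (-k).toNat * (r:ℂ)^(-k).toNat) := by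
    intro k
    simp only [hqdef, hwdef, EE]
    exact moment hc0 hsum h0 h1 k
  have hEEcont : ∀ k : ℤ, Continuous (EE k) := fun k => cont_E k
  have hIntEE : ∀ k : ℤ, IntegrableOn (fun t => q t * EE k t) (Set.Ioc (0:ℝ) (2*π)) volume :=
    fun k => (hqc.mul (hEEcont k)).integrableOn_Ioc
  set a : ℂ := c n * (r:ℂ)^n / 2 with hadef
  set b : ℂ := c m * (r:ℂ)^m / 2 with hbdef
  set d : ℂ := c (n+m) * (r:ℂ)^(n+m) / 2 with hddef
  have hone : ∀ t : ℝ, EE (0:ℤ) t = 1 := by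
    intro t
    simp [EE]
  have hconj : ∀ (k : ℤ) (t : ℝ), (starRingEnd ℂ) (EE k t) = EE (-k) t := fun k t => conj_E k t
  have hnormEE : ∀ (k : ℤ) (t : ℝ), ‖EE k t‖ = 1 := fun k t => norm_E k t
  have hWval : ∀ k : ℕ, 1 ≤ k → (∫ t in Set.Ioc (0:ℝ) (2*π), q t * EE (k:ℤ) t)
      = (π:ℂ) * (c k * (r:ℂ)^k) := by
    intro k hk
    rw [hMom, if_neg (by omega), if_pos (by exact_mod_cast hk)]
    simp only [Int.toNat_natCast]
  have hWval' : ∀ k : ℕ, 1 ≤ k → (∫ t in Set.Ioc (0:ℝ) (2*π), q t * EE (-(k:ℤ)) t)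
      = (π:ℂ) * (starRingEnd ℂ) (c k * (r:ℂ)^k) := by
    intro k hk
    rw [hMom, if_neg (by omega), if_neg (by omega)]
    simp only [neg_neg, Int.toNat_natCast]
  have hWn : (∫ t in Set.Ioc (0:ℝ) (2*π), q t * EE (n:ℤ) t) = 2*(π:ℂ) * a := by
    rw [hWval n hn, hadef]; ring
  have hWm : (∫ t in Set.Ioc (0:ℝ) (2*π), q t * EE (m:ℤ) t) = 2*(π:ℂ) * b := by
    rw [hWval m hm, hbdef]; ring
  have hWnm : (∫ t in Set.Ioc (0:ℝ) (2*π), q t * EE ((n+m:ℕ):ℤ) t) = 2*(π:ℂ) * d := by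
    rw [hWval (n+m) (by omega), hddef]; ring
  have hWn' : (∫ t in Set.Ioc (0:ℝ) (2*π), q t * EE (-(n:ℤ)) t) = 2*(π:ℂ) * (starRingEnd ℂ) a := by
    rw [hWval' n hn, hadef]
    simp only [map_div₀, map_mul, map_pow, Complex.conj_ofReal, map_ofNat]
    ring
  have hWm' : (∫ t in Set.Ioc (0:ℝ) (2*π), q t * EE (-(m:ℤ)) t) = 2*(π:ℂ) * (starRingEnd ℂ) b := by
    rw [hWval' m hm, hbdef]
    simp only [map_div₀, map_mul, map_pow, Complex.conj_ofReal, map_ofNat]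
    ring
  have hW0 : (∫ t in Set.Ioc (0:ℝ) (2*π), q t * EE (0:ℤ) t) = (2*π:ℂ) := by
    rw [hMom, if_pos rfl]
  -- value of A-type integrals
  have hAgen : ∀ (k : ℕ), 1 ≤ k → ∀ (e : ℂ), (e = c k * (r:ℂ)^k / 2) →
      (∫ t in Set.Ioc (0:ℝ) (2*π), ‖EE (k:ℤ) t - e‖^2 * w t)
        = 2*π*(1 - Complex.abs e^2) := by
    intro k hk e hedef
    have hWk : (∫ t in Set.Ioc (0:ℝ) (2*π), q t * EE (k:ℤ) t) = 2*(π:ℂ) * e := by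
      rw [hWval k hk, hedef]; ring
    have hWk' : (∫ t in Set.Ioc (0:ℝ) (2*π), q t * EE (-(k:ℤ)) t)
        = 2*(π:ℂ) * (starRingEnd ℂ) e := by
      rw [hWval' k hk, hedef]
      simp only [map_div₀, map_mul, map_pow, Complex.conj_ofReal, map_ofNat]
      ring
    have hpt : ∀ t : ℝ, ((‖EE (k:ℤ) t - e‖^2 * w t : ℝ) : ℂ)
        = q t * EE (0:ℤ) t - (starRingEnd ℂ) e * (q t * EE (k:ℤ) t)
            - e * (q t * EE (-(k:ℤ)) t) + (e * (starRingEnd ℂ) e) * (q t * EE (0:ℤ) t) := by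
      intro t
      have huu : EE (k:ℤ) t * EE (-(k:ℤ)) t = 1 := by
        rw [EE, EE, mul_E]
        norm_num
      have h1 : ((‖EE (k:ℤ) t - e‖^2 * w t : ℝ) : ℂ)
          = ((EE (k:ℤ) t - e) * (starRingEnd ℂ) (EE (k:ℤ) t - e)) * q t := by
        rw [Complex.mul_conj, Complex.normSq_eq_abs, hqdef]
        push_cast [Complex.norm_eq_abs]
        ring
      rw [h1, map_sub, hconj, hone]
      linear_combination q t * huu
    have hAc : (∫ t in Set.Ioc (0:ℝ) (2*π), ((‖EE (k:ℤ) t - e‖^2 * w t : ℝ) : ℂ))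
        = ((2*π*(1 - Complex.abs e^2) : ℝ) : ℂ) := by
      rw [integral_congr_ae (Eventually.of_forall hpt)]
      have i1 : Integrable (fun t => q t * EE (0:ℤ) t - (starRingEnd ℂ) e * (q t * EE (k:ℤ) t))
          (volume.restrict (Set.Ioc (0:ℝ) (2*π))) :=
        (hIntEE 0).sub ((hIntEE (k:ℤ)).const_mul _)
      have i2 : Integrable (fun t => q t * EE (0:ℤ) t - (starRingEnd ℂ) e * (q t * EE (k:ℤ) t)
            - e * (q t * EE (-(k:ℤ)) t)) (volume.restrict (Set.Ioc (0:ℝ) (2*π))) :=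
        i1.sub ((hIntEE (-(k:ℤ))).const_mul _)
      rw [integral_add i2 ((hIntEE 0).const_mul _),
          integral_sub i1 ((hIntEE (-(k:ℤ))).const_mul _),
          integral_sub (hIntEE 0) ((hIntEE (k:ℤ)).const_mul _),
          integral_const_mul, integral_const_mul, integral_const_mul,
          hW0, hWk, hWk']
      have haa : e * (starRingEnd ℂ) e = ((Complex.abs e^2 : ℝ) : ℂ) := by
        rw [Complex.mul_conj, Complex.normSq_eq_abs]
      push_cast at haa ⊢
      linear_combination (-2*(π:ℂ)) * haa
    rw [← Complex.ofReal_inj]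
    rw [show ((2*π*(1 - Complex.abs e^2) : ℝ) : ℂ) = ((2*π*(1 - Complex.abs e^2) : ℝ) : ℂ) from rfl] -- noop
    rw [← hAc]
    exact (integral_ofReal (f := fun t => ‖EE (k:ℤ) t - e‖^2 * w t)).symm
  have hAreal := hAgen n hn a hadef
  have hBreal := hAgen m hm b hbdef
  have hx1 : Complex.abs a ≤ 1 := by
    have hnn : (0:ℝ) ≤ ∫ t in Set.Ioc (0:ℝ) (2*π), ‖EE (n:ℤ) t - a‖^2 * w t :=
      integral_nonneg fun t => mul_nonneg (sq_nonneg _) (hwpos t).le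
    rw [hAreal] at hnn
    have hxx : (0:ℝ) ≤ 1 - Complex.abs a^2 := by nlinarith [Real.pi_pos]
    nlinarith [Complex.abs.nonneg a]
  have hy1 : Complex.abs b ≤ 1 := by
    have hnn : (0:ℝ) ≤ ∫ t in Set.Ioc (0:ℝ) (2*π), ‖EE (m:ℤ) t - b‖^2 * w t :=
      integral_nonneg fun t => mul_nonneg (sq_nonneg _) (hwpos t).le
    rw [hBreal] at hnn
    have hxx : (0:ℝ) ≤ 1 - Complex.abs b^2 := by nlinarith [Real.pi_pos]
    nlinarith [Complex.abs.nonneg b]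
  have hC : (∫ t in Set.Ioc (0:ℝ) (2*π), ((EE (n:ℤ) t - a) * (EE (m:ℤ) t - b)) * q t)
      = 2*(π:ℂ) * (d - a*b) := by
    have hpt : ∀ t : ℝ, ((EE (n:ℤ) t - a) * (EE (m:ℤ) t - b)) * q t
        = q t * EE ((n+m:ℕ):ℤ) t - b * (q t * EE (n:ℤ) t) - a * (q t * EE (m:ℤ) t)
          + (a*b) * (q t * EE (0:ℤ) t) := by
      intro t
      have huv : EE (n:ℤ) t * EE (m:ℤ) t = EE ((n+m:ℕ):ℤ) t := by
        rw [EE, EE, EE, mul_E]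
        norm_num
      rw [hone]
      linear_combination q t * huv
    rw [integral_congr_ae (Eventually.of_forall hpt)]
    have i1 : Integrable (fun t => q t * EE ((n+m:ℕ):ℤ) t - b * (q t * EE (n:ℤ) t))
        (volume.restrict (Set.Ioc (0:ℝ) (2*π))) := (hIntEE _).sub ((hIntEE _).const_mul _)
    have i2 : Integrable (fun t => q t * EE ((n+m:ℕ):ℤ) t - b * (q t * EE (n:ℤ) t)
        - a * (q t * EE (m:ℤ) t)) (volume.restrict (Set.Ioc (0:ℝ) (2*π))) :=
      i1.sub ((hIntEE _).const_mul _)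
    rw [integral_add i2 ((hIntEE 0).const_mul _),
        integral_sub i1 ((hIntEE (m:ℤ)).const_mul _),
        integral_sub (hIntEE ((n+m:ℕ):ℤ)) ((hIntEE (n:ℤ)).const_mul _),
        integral_const_mul, integral_const_mul, integral_const_mul, hWnm, hWn, hWm, hW0]
    ring
  have hW0r : (∫ t in Set.Ioc (0:ℝ) (2*π), w t) = 2*π := by
    have hpt0 : ∀ t : ℝ, ((w t : ℝ):ℂ) = q t * EE (0:ℤ) t := by
      intro t
      rw [hone, mul_one]
    have h3 : (∫ t in Set.Ioc (0:ℝ) (2*π), ((w t : ℝ):ℂ)) = ∫ t in Set.Ioc (0:ℝ) (2*π), q t * EE (0:ℤ) t :=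
      integral_congr_ae (Eventually.of_forall hpt0)
    rw [hW0] at h3
    have h5 : (∫ t in Set.Ioc (0:ℝ) (2*π), ((w t : ℝ):ℂ))
        = (((∫ t in Set.Ioc (0:ℝ) (2*π), w t : ℝ)):ℂ) := integral_ofReal (f := fun t => w t)
    rw [h5] at h3
    exact_mod_cast h3
  have h2pi : ‖(2*(π:ℂ))‖ = 2*π := by
    rw [show (2*(π:ℂ)) = ((2*π:ℝ):ℂ) by push_cast; ring]
    rw [Complex.norm_eq_abs, Complex.abs_ofReal, abs_of_pos Real.two_pi_pos]
  have hd1 : Complex.abs d ≤ 1 := by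
    have hb1 : ‖∫ t in Set.Ioc (0:ℝ) (2*π), q t * EE ((n+m:ℕ):ℤ) t‖ ≤ 2*π := by
      refine (norm_integral_le_integral_norm _).trans ?_
      have hmm : ∀ t:ℝ, ‖q t * EE ((n+m:ℕ):ℤ) t‖ = w t := fun t => by
        rw [norm_mul, hqnorm, hnormEE, mul_one]
      rw [integral_congr_ae (Eventually.of_forall hmm), hW0r]
    rw [hWnm, norm_mul, h2pi, Complex.norm_eq_abs] at hb1
    nlinarith [Real.pi_pos]
  have cu : Continuous fun t : ℝ => ‖EE (n:ℤ) t - a‖^2 :=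
    (((hEEcont (n:ℤ)).sub continuous_const).norm).pow 2
  have cv : Continuous fun t : ℝ => ‖EE (m:ℤ) t - b‖^2 :=
    (((hEEcont (m:ℤ)).sub continuous_const).norm).pow 2
  have hsb : ∀ s : ℝ, 0 < s → Complex.abs (d - a*b)
      ≤ (s*(1 - Complex.abs a^2) + (1 - Complex.abs b^2)/s)/2 := by
    intro s hs
    have hle : ∀ t : ℝ, ‖((EE (n:ℤ) t - a) * (EE (m:ℤ) t - b)) * q t‖
        ≤ ((s*‖EE (n:ℤ) t - a‖^2 + ‖EE (m:ℤ) t - b‖^2/s)/2) * w t := by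
      intro t
      rw [norm_mul, norm_mul, hqnorm]
      have key2 : ‖EE (n:ℤ) t - a‖ * ‖EE (m:ℤ) t - b‖
          ≤ (s*‖EE (n:ℤ) t - a‖^2 + ‖EE (m:ℤ) t - b‖^2/s)/2 := by
        rw [show (s*‖EE (n:ℤ) t - a‖^2 + ‖EE (m:ℤ) t - b‖^2/s)/2
            = (s^2*‖EE (n:ℤ) t - a‖^2 + ‖EE (m:ℤ) t - b‖^2)/(2*s) by field_simp,
          le_div_iff₀ (by positivity)]
        nlinarith [sq_nonneg (s*‖EE (n:ℤ) t - a‖ - ‖EE (m:ℤ) t - b‖)]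
      exact mul_le_mul_of_nonneg_right key2 (hwpos t).le
    have hInt2 : Integrable (fun t => ((s*‖EE (n:ℤ) t - a‖^2 + ‖EE (m:ℤ) t - b‖^2/s)/2) * w t)
        (volume.restrict (Set.Ioc (0:ℝ) (2*π))) := by
      apply Continuous.integrableOn_Ioc
      exact (((continuous_const.mul cu).add (cv.div_const s)).div_const 2).mul hwc
    have h1 : ‖∫ t in Set.Ioc (0:ℝ) (2*π), ((EE (n:ℤ) t - a) * (EE (m:ℤ) t - b)) * q t‖
        ≤ ∫ t in Set.Ioc (0:ℝ) (2*π), ((s*‖EE (n:ℤ) t - a‖^2 + ‖EE (m:ℤ) t - b‖^2/s)/2) * w t := by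
      refine (norm_integral_le_integral_norm _).trans ?_
      refine integral_mono ?_ hInt2 hle
      exact ((((hEEcont (n:ℤ)).sub continuous_const).mul
        ((hEEcont (m:ℤ)).sub continuous_const)).mul hqc).norm.integrableOn_Ioc
    have h2 : (∫ t in Set.Ioc (0:ℝ) (2*π), ((s*‖EE (n:ℤ) t - a‖^2 + ‖EE (m:ℤ) t - b‖^2/s)/2) * w t)
        = (s*(2*π*(1 - Complex.abs a^2)) + (2*π*(1 - Complex.abs b^2))/s)/2 := by
      have hpt3 : ∀ t : ℝ, ((s*‖EE (n:ℤ) t - a‖^2 + ‖EE (m:ℤ) t - b‖^2/s)/2) * w t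
          = (s/2) * (‖EE (n:ℤ) t - a‖^2 * w t) + (1/(2*s)) * (‖EE (m:ℤ) t - b‖^2 * w t) := by
        intro t; field_simp
      rw [integral_congr_ae (Eventually.of_forall hpt3),
        integral_add ((show IntegrableOn (fun t => ‖EE (n:ℤ) t - a‖^2 * w t) (Set.Ioc (0:ℝ) (2*π)) volume from (cu.mul hwc).integrableOn_Ioc).const_mul _)
          ((show IntegrableOn (fun t => ‖EE (m:ℤ) t - b‖^2 * w t) (Set.Ioc (0:ℝ) (2*π)) volume from (cv.mul hwc).integrableOn_Ioc).const_mul _),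
        integral_const_mul, integral_const_mul, hAreal, hBreal]
      field_simp
    rw [hC, norm_mul, h2pi, Complex.norm_eq_abs, h2] at h1
    have h4 : (s*(2*π*(1 - Complex.abs a^2)) + (2*π*(1 - Complex.abs b^2))/s)/2
        = (2*π) * ((s*(1 - Complex.abs a^2) + (1 - Complex.abs b^2)/s)/2) := by
      field_simp
    rw [h4] at h1
    exact le_of_mul_le_mul_left h1 Real.two_pi_pos
  have hA0 : (0:ℝ) ≤ 1 - Complex.abs a^2 := by nlinarith [hx1, Complex.abs.nonneg a]
  have hB0 : (0:ℝ) ≤ 1 - Complex.abs b^2 := by nlinarith [hy1, Complex.abs.nonneg b]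
  have hcs : Complex.abs (d - a*b)
      ≤ Real.sqrt (1 - Complex.abs a^2) * Real.sqrt (1 - Complex.abs b^2) :=
    cs_aux hA0 hB0 hsb
  have h2ab : Complex.abs (2*(a*b) - d) ≤ 1 := by
    have ht := Complex.abs.add_le (a*b) (a*b - d)
    rw [Complex.abs.map_sub (a*b) d] at ht
    rw [show a*b + (a*b - d) = 2*(a*b) - d by ring, map_mul] at ht
    have h5 := Real.sq_sqrt hA0
    have h6 := Real.sq_sqrt hB0
    nlinarith [Real.sqrt_nonneg (1 - Complex.abs a^2), Real.sqrt_nonneg (1 - Complex.abs b^2),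
      sq_nonneg (Real.sqrt (1 - Complex.abs a^2) - Real.sqrt (1 - Complex.abs b^2)),
      sq_nonneg (Complex.abs a - Complex.abs b), Complex.abs.nonneg a, Complex.abs.nonneg b]
  constructor
  · have heq : 2*(a*b) - d = ((r:ℂ))^(n+m) * (c n * c m - c (n+m)) / 2 := by
      rw [hadef, hbdef, hddef]; ring
    rw [heq, map_div₀, map_mul, map_pow, Complex.abs_ofReal, abs_of_pos h0,
      Complex.abs_two] at h2ab
    linarith
  · rw [hddef, map_div₀, map_mul, map_pow, Complex.abs_ofReal, abs_of_pos h0,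
      Complex.abs_two] at hd1
    have hcomm : r^(n+m) * Complex.abs (c (n+m)) = Complex.abs (c (n+m)) * r^(n+m) :=
      mul_comm _ _
    linarith

theorem stmt_8 (p : ℂ → ℂ) (c : ℕ → ℂ) (hc0 : c 0 = 1)
    (hsum : ∀ z ∈ Metric.ball (0:ℂ) 1, HasSum (fun k => c k * z ^ k) (p z))
    (hre : ∀ z ∈ Metric.ball (0:ℂ) 1, 0 < (p z).re) :
    ∀ n m : ℕ, 1 ≤ n → 1 ≤ m → ∀ lam : ℝ,
      ((0 ≤ lam ∧ lam ≤ 1) → ‖(lam * c n * c m - c (n + m) : ℂ)‖ ≤ 2)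
        ∧ ((lam < 0 ∨ 1 < lam) →
            ‖(lam * c n * c m - c (n + m) : ℂ)‖ ≤ 2 * |2*lam - 1|) := by
  intro n m hn hm lam
  simp only [Complex.norm_eq_abs]
  have hlim : ∀ X : ℂ, (∀ r : ℝ, 0 < r → r < 1 → r^(n+m) * Complex.abs X ≤ 2)
      → Complex.abs X ≤ 2 := by
    intro X hX
    have ht : Tendsto (fun r : ℝ => r^(n+m) * Complex.abs X) (𝓝[<] (1:ℝ))
        (𝓝 (Complex.abs X)) := by
      have h2 : Tendsto (fun r : ℝ => r^(n+m) * Complex.abs X) (𝓝 (1:ℝ))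
          (𝓝 ((1:ℝ)^(n+m) * Complex.abs X)) :=
        ((continuous_pow (n+m)).mul continuous_const).tendsto 1
      simpa using h2.mono_left nhdsWithin_le_nhds
    refine le_of_tendsto ht ?_
    filter_upwards [Ioo_mem_nhdsLT_of_mem (show (1:ℝ) ∈ Set.Ioc (0:ℝ) 1 by constructor <;> norm_num)]
      with r hr
    exact hX r hr.1 hr.2
  have hb1 : Complex.abs (c n * c m - c (n+m)) ≤ 2 :=
    hlim _ (fun r h0 h1 => (key_r hc0 hsum hre h0 h1 n m hn hm).1)
  have hb2 : Complex.abs (c (n+m)) ≤ 2 :=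
    hlim _ (fun r h0 h1 => (key_r hc0 hsum hre h0 h1 n m hn hm).2)
  have hid : (lam:ℂ) * c n * c m - c (n+m)
      = (lam:ℂ) * (c n * c m - c (n+m)) + ((lam - 1 : ℝ):ℂ) * c (n+m) := by
    push_cast
    ring
  have habs : Complex.abs ((lam:ℂ) * c n * c m - c (n+m))
      ≤ |lam| * Complex.abs (c n * c m - c (n+m)) + |lam - 1| * Complex.abs (c (n+m)) := by
    rw [hid]
    refine (Complex.abs.add_le _ _).trans ?_
    rw [map_mul, map_mul, Complex.abs_ofReal, Complex.abs_ofReal]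
  have k1 : |lam| * Complex.abs (c n * c m - c (n+m)) ≤ |lam| * 2 :=
    mul_le_mul_of_nonneg_left hb1 (abs_nonneg lam)
  have k2 : |lam - 1| * Complex.abs (c (n+m)) ≤ |lam - 1| * 2 :=
    mul_le_mul_of_nonneg_left hb2 (abs_nonneg _)
  constructor
  · rintro ⟨hl0, hl1⟩
    rw [_root_.abs_of_nonneg hl0] at k1 habs
    rw [_root_.abs_of_nonpos (by linarith : lam - 1 ≤ 0)] at k2 habs
    linarith
  · intro hl
    rcases hl with hl | hl
    · rw [_root_.abs_of_neg hl] at k1 habs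
      rw [_root_.abs_of_nonpos (by linarith : lam - 1 ≤ 0)] at k2 habs
      rw [_root_.abs_of_neg (by linarith : 2*lam - 1 < 0)]
      linarith
    · rw [_root_.abs_of_pos (by linarith : (0:ℝ) < lam)] at k1 habs
      rw [_root_.abs_of_pos (by linarith : (0:ℝ) < lam - 1)] at k2 habs
      rw [_root_.abs_of_pos (by linarith : (0:ℝ) < 2*lam - 1)]
      linarith
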